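/- Every almost disjoint family of ω₁ many uncountable sets is essentially disjoint: if 𝒳 is a family of ω₁ many sets, each of cardinality ω₁, such that any two distinct members have countable intersection, then each X ∈ 𝒳 has a subset Y_X with X \ Y_X countable such that the family {Y_X : X ∈ 𝒳} is pairwise disjoint. -/
import Mathlib
open Cardinal

universe u

theorem almostDisjoint_essentiallyDisjoint {α : Type u} {ι : Type u}
    (hι : #ι = aleph 1) (X : ι → Set α)
    (hcard : ∀ i, #↥(X i) = aleph 1)
    (had : ∀ i j, i ≠ j → #↥(X i ∩ X j) ≤ aleph0) :
    ∃ Y : ι → Set α, (∀ i, Y i ⊆ X i) ∧ (∀ i, #↥(X i \ Y i) ≤ aleph0) ∧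
      ∀ i j, i ≠ j → Disjoint (Y i) (Y j) := by
  have e : ι ≃ (aleph 1).ord.ToType := by
    apply Classical.choice
    rw [← Cardinal.eq, hι, mk_ord_toType]
  refine ⟨fun i => X i \ ⋃ j ∈ {j | e j < e i}, X j, fun i => Set.diff_subset, ?_, ?_⟩
  · intro i
    have hsub : X i \ (X i \ ⋃ j ∈ {j | e j < e i}, X j) ⊆
        ⋃ j ∈ {j | e j < e i}, X i ∩ X j := by
      intro x hx
      obtain ⟨hxi, h2⟩ := hx
      have := not_not.1 (fun h => h2 ⟨hxi, h⟩)
      obtain ⟨j, hj, hxj⟩ := Set.mem_iUnion₂.1 this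
      exact Set.mem_iUnion₂.2 ⟨j, hj, hxi, hxj⟩
    refine le_trans (mk_le_mk_of_subset hsub) ?_
    have hcnt : ({j | e j < e i} : Set ι).Countable := by
      rw [countable_iff_lt_aleph_one]
      refine lt_of_le_of_lt ?_ (mk_Iio_ord_toType (e i))
      exact Cardinal.mk_le_of_injective (f := fun j => (⟨e j.1, j.2⟩ : Set.Iio (e i)))
        (fun a b hab => Subtype.ext (e.injective (Subtype.ext_iff.1 hab)))
    rw [Cardinal.mk_le_aleph0_iff, Set.countable_coe_iff]
    refine hcnt.biUnion (fun j hj => ?_)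
    rw [← Set.countable_coe_iff]
    rw [← Cardinal.mk_le_aleph0_iff]
    refine had i j (fun h => ?_); subst h; exact lt_irrefl (e i) hj
  · intro i j hij
    rcases lt_trichotomy (e i) (e j) with h | h | h
    · apply Set.disjoint_of_subset_left Set.diff_subset
      rw [Set.disjoint_right]
      intro x hx hxi
      exact hx.2 (Set.mem_iUnion₂.2 ⟨i, h, hxi⟩)
    · exact absurd (e.injective h) hij
    · apply Set.disjoint_of_subset_right Set.diff_subset
      rw [Set.disjoint_left]
      intro x hx hxj
      exact hx.2 (Set.mem_iUnion₂.2 ⟨j, h, hxj⟩)
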